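/- Let p ≡ 3 (mod 4) be prime, t ≥ 1, and m₂, m₃, n₂, n₃ ∈ ℤ. Then S₄(m₂,m₃,n₂,n₃; p^{4t}) := Σ_{a,b mod p^{2t}, gcd(a,b,p)=1} e(−2(m₂a − m₃b)(a²+b²)⁻¹ / p^{2t}) e((n₂a + n₃b)/p^{2t}) equals p^{2t} · Σ' e((−2(m₂a−m₃b)(a²+b²)⁻¹ + n₂a + n₃b)/p^{2t}), where Σ' runs over a, b mod p^t with gcd(a,b,p)=1 satisfying f(a,b) ≡ g(a,b) ≡ 0 (mod p^t), with f(a,b) = −2m₂(a²+b²)⁻¹ + 4(m₂a−m₃b)a(a²+b²)⁻² + n₂ and g(a,b) = 2m₃(a²+b²)⁻¹ + 4(m₂a−m₃b)b(a²+b²)⁻² + n₃. -/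

import Mathlib

/-- `e(q) = exp(2πiq)`. -/
noncomputable def eQ (q : ℚ) : ℂ := Complex.exp (2 * Real.pi * Complex.I * q)

noncomputable def phi (n : ℕ) (m₂ m₃ n₂ n₃ : ℤ) (a b : ZMod n) : ZMod n :=
  -2 * ((m₂ : ZMod n) * a - (m₃ : ZMod n) * b) * (a ^ 2 + b ^ 2)⁻¹
    + (n₂ : ZMod n) * a + (n₃ : ZMod n) * b

lemma eQ_val_eq_stdAddChar {N : ℕ} [NeZero N] (x : ZMod N) :
    eQ ((x.val : ℚ) / ((N : ℕ) : ℚ)) = ZMod.stdAddChar x := by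
  rw [ZMod.stdAddChar_apply, ZMod.toCircle_apply, eQ]
  congr 1
  push_cast
  ring

def zmodPairEquiv (q n : ℕ) [NeZero q] [NeZero n] (hn : n = q * q) :
    (ZMod q × ZMod q) ≃ ZMod n where
  toFun xu := ((xu.1.val + q * xu.2.val : ℕ) : ZMod n)
  invFun a := (((a.val % q : ℕ) : ZMod q), ((a.val / q : ℕ) : ZMod q))
  left_inv := by
    rintro ⟨x, u⟩
    have hx := ZMod.val_lt x
    have hu := ZMod.val_lt u
    have hlt : x.val + q * u.val < n := by subst hn; nlinarith
    have hval : ((x.val + q * u.val : ℕ) : ZMod n).val = x.val + q * u.val :=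
      ZMod.val_cast_of_lt hlt
    simp only [hval, Prod.mk.injEq]
    constructor
    · rw [Nat.add_mul_mod_self_left, Nat.mod_eq_of_lt hx, ZMod.natCast_zmod_val]
    · rw [Nat.add_mul_div_left _ _ (Nat.pos_of_ne_zero (NeZero.ne q)),
        Nat.div_eq_of_lt hx, zero_add, ZMod.natCast_zmod_val]
  right_inv := by
    intro a
    have hq : 0 < q := Nat.pos_of_ne_zero (NeZero.ne q)
    have hlt : a.val / q < q := by
      rw [Nat.div_lt_iff_lt_mul hq, ← hn]; exact ZMod.val_lt a
    simp only [ZMod.val_natCast, Nat.mod_mod_of_dvd _ dvd_rfl, Nat.mod_eq_of_lt hlt]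
    rw [Nat.mod_add_div, ZMod.natCast_zmod_val]

lemma expand1 (q n : ℕ) [NeZero q] [NeZero n] (hn : n = q * q) (f : ZMod n → ℂ) :
    ∑ a : ZMod n, f a
    = ∑ x : ZMod q, ∑ u : ZMod q, f ((x.val + q * u.val : ℕ) : ZMod n) := by
  rw [← Equiv.sum_comp (zmodPairEquiv q n hn) f, Fintype.sum_prod_type]
  rfl

set_option maxHeartbeats 1000000 in
lemma double_expand (q n : ℕ) [NeZero q] [NeZero n] (hn : n = q * q) (T : ZMod n → ZMod n → ℂ) :
    ∑ a : ZMod n, ∑ b : ZMod n, T a b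
    = ∑ x : ZMod q, ∑ y : ZMod q, ∑ u : ZMod q, ∑ v : ZMod q,
        T ((x.val + q * u.val : ℕ) : ZMod n) ((y.val + q * v.val : ℕ) : ZMod n) := by
  rw [expand1 q n hn]
  refine Finset.sum_congr rfl fun x _ => ?_
  exact Eq.trans (Finset.sum_congr rfl fun u _ => expand1 q n hn _) Finset.sum_comm

lemma isUnit_sq_add_sq (p k : ℕ) [Fact p.Prime] (hp4 : p % 4 = 3) (hk : k ≠ 0)
    (x y : ZMod (p ^ k)) (h : IsUnit x ∨ IsUnit y) : IsUnit (x ^ 2 + y ^ 2) := by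
  haveI : NeZero (p ^ k) := ⟨pow_ne_zero k (Fact.out (p := p.Prime)).pos.ne'⟩
  have hdvd : p ∣ p ^ k := dvd_pow_self p hk
  set φ := ZMod.castHom hdvd (ZMod p) with hφ
  have hz : ∀ z : ZMod (p ^ k), IsUnit z ↔ φ z ≠ 0 := by
    intro z
    rw [show (IsUnit z ↔ ¬ p ∣ z.val) from ?_, hφ]
    · rw [ZMod.castHom_apply, ← ZMod.natCast_val, Ne, ZMod.natCast_eq_zero_iff]
    · conv_lhs => rw [← ZMod.natCast_zmod_val z]
      rw [ZMod.isUnit_iff_coprime, Nat.coprime_pow_right_iff (Nat.pos_of_ne_zero hk),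
        Nat.coprime_comm, Nat.Prime.coprime_iff_not_dvd (Fact.out (p := p.Prime))]
  simp only [hz] at h ⊢
  set a := φ x
  set b := φ y
  have hab : φ (x ^ 2 + y ^ 2) = a ^ 2 + b ^ 2 := by push_cast [map_add, map_pow]; rfl
  rw [hab]
  intro hc
  have hsq : IsSquare (-1 : ZMod p) := by
    rcases eq_or_ne a 0 with ha | ha
    · rcases h with h' | h'
      · exact absurd ha h'
      · exfalso
        apply h'
        have : b ^ 2 = 0 := by rw [ha] at hc; linear_combination hc
        exact pow_eq_zero_iff (n := 2) (by norm_num) |>.mp this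
    · refine ⟨b * a⁻¹, ?_⟩
      have hainv : a * a⁻¹ = 1 := mul_inv_cancel₀ ha
      linear_combination (-(a⁻¹)^2) * hc + (a * a⁻¹ + 1) * hainv
  rw [ZMod.exists_sq_eq_neg_one_iff] at hsq
  exact hsq hp4

lemma isUnit_zmod_pow_iff' (p k : ℕ) [Fact p.Prime] (hk : k ≠ 0) (x : ZMod (p ^ k)) :
    IsUnit x ↔ ¬ p ∣ x.val := by
  haveI : NeZero (p ^ k) := ⟨pow_ne_zero k (Fact.out (p := p.Prime)).pos.ne'⟩
  conv_lhs => rw [← ZMod.natCast_zmod_val x]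
  rw [ZMod.isUnit_iff_coprime, Nat.coprime_pow_right_iff (Nat.pos_of_ne_zero hk),
    Nat.coprime_comm, Nat.Prime.coprime_iff_not_dvd (Fact.out (p := p.Prime))]

lemma hunit_lemma (p t : ℕ) [Fact p.Prime] (ht : t ≠ 0) (z w : ZMod (p ^ t)) :
    IsUnit (((z.val + p ^ t * w.val : ℕ)) : ZMod (p ^ (2 * t))) ↔ IsUnit z := by
  have hp : p.Prime := Fact.out
  haveI : NeZero (p ^ t) := ⟨pow_ne_zero _ hp.pos.ne'⟩
  haveI : NeZero (p ^ (2 * t)) := ⟨pow_ne_zero _ hp.pos.ne'⟩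
  have hzlt := ZMod.val_lt z
  have hwlt := ZMod.val_lt w
  have h2t : p ^ (2 * t) = p ^ t * p ^ t := by rw [← pow_add]; congr 1; omega
  have hlt : z.val + p ^ t * w.val < p ^ (2 * t) := by rw [h2t]; nlinarith
  rw [isUnit_zmod_pow_iff' p (2 * t) (by omega), isUnit_zmod_pow_iff' p t ht,
    ZMod.val_cast_of_lt hlt]
  have h2 : p ∣ p ^ t * w.val := (dvd_pow_self p ht).mul_right _
  constructor
  · intro h hz; exact h (Nat.dvd_add hz h2)
  · intro h hz; exact h ((Nat.dvd_add_right h2).mp (by rwa [add_comm] at hz))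

lemma hS_lemma (p t : ℕ) [Fact p.Prime] (hp4 : p % 4 = 3) (ht : t ≠ 0) (x y : ZMod (p ^ t))
    (hxy : IsUnit x ∨ IsUnit y) :
    IsUnit (((x.val : ℕ) : ZMod (p ^ (2 * t))) ^ 2 + ((y.val : ℕ) : ZMod (p ^ (2 * t))) ^ 2) := by
  have hp : p.Prime := Fact.out
  haveI : NeZero (p ^ t) := ⟨pow_ne_zero _ hp.pos.ne'⟩
  haveI : NeZero (p ^ (2 * t)) := ⟨pow_ne_zero _ hp.pos.ne'⟩
  have h2t : p ^ (2 * t) = p ^ t * p ^ t := by rw [← pow_add]; congr 1; omega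
  have hle : p ^ t ≤ p ^ (2 * t) := Nat.pow_le_pow_right hp.pos (by omega)
  apply isUnit_sq_add_sq p (2 * t) hp4 (by omega)
  have key : ∀ z : ZMod (p ^ t), IsUnit z → IsUnit ((z.val : ℕ) : ZMod (p ^ (2 * t))) := by
    intro z hz
    rw [isUnit_zmod_pow_iff' p (2 * t) (by omega),
      ZMod.val_cast_of_lt (lt_of_lt_of_le (ZMod.val_lt z) hle)]
    rw [isUnit_zmod_pow_iff' p t ht] at hz
    exact hz
  rcases hxy with h | h
  · exact Or.inl (key x h)
  · exact Or.inr (key y h)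

lemma char_sum' (q : ℕ) [NeZero q] (c : ZMod q) :
    ∑ u : ZMod q, ZMod.stdAddChar (c * u) = if c = 0 then (q : ℂ) else 0 := by
  split_ifs with h
  · simp only [h, zero_mul, AddChar.map_zero_eq_one, Finset.sum_const, Finset.card_univ,
      ZMod.card, nsmul_eq_mul, mul_one]
  · exact AddChar.sum_eq_zero_of_ne_one (ZMod.isPrimitive_stdAddChar q h)

lemma castHom_inv' {n q : ℕ} [NeZero n] [NeZero q] (h : q ∣ n) (z : ZMod n) (hz : IsUnit z) :
    ZMod.castHom h (ZMod q) z⁻¹ = (ZMod.castHom h (ZMod q) z)⁻¹ := by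
  symm
  apply ZMod.inv_eq_of_mul_eq_one
  rw [← map_mul, ZMod.mul_inv_of_unit z hz, map_one]

lemma stdAddChar_q_mul' {q n : ℕ} [NeZero q] [NeZero n] (hn : n = q * q) (c : ZMod n) :
    ZMod.stdAddChar ((q : ZMod n) * c) = ZMod.stdAddChar ((c.val : ZMod q)) := by
  subst hn
  rw [ZMod.stdAddChar_apply, ZMod.toCircle_apply, ZMod.stdAddChar_apply, ZMod.toCircle_apply]
  have h1 : ((q : ZMod (q * q)) * c).val = q * (c.val % q) := by
    conv_lhs => rw [← ZMod.natCast_zmod_val c, ← Nat.cast_mul]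
    rw [ZMod.val_natCast, Nat.mul_mod_mul_left]
  have h2 : ((c.val : ZMod q)).val = c.val % q := ZMod.val_natCast _ _
  rw [h1, h2]
  congr 1
  have hq : (q : ℂ) ≠ 0 := Nat.cast_ne_zero.mpr (NeZero.ne q)
  push_cast
  field_simp

lemma core_lemma (q n : ℕ) [NeZero q] [NeZero n] (hn : n = q * q)
    (m₂ m₃ n₂ n₃ : ℤ) (x y : ZMod q)
    (hunit : ∀ (z w : ZMod q), IsUnit (((z.val + q * w.val : ℕ)) : ZMod n) ↔ IsUnit z)
    (hS : IsUnit x ∨ IsUnit y →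
      IsUnit (((x.val : ℕ) : ZMod n) ^ 2 + ((y.val : ℕ) : ZMod n) ^ 2)) :
    (∑ u : ZMod q, ∑ v : ZMod q,
      if IsUnit (((x.val + q * u.val : ℕ)) : ZMod n)
          ∨ IsUnit (((y.val + q * v.val : ℕ)) : ZMod n) then
        ZMod.stdAddChar (phi n m₂ m₃ n₂ n₃
          (((x.val + q * u.val : ℕ)) : ZMod n) (((y.val + q * v.val : ℕ)) : ZMod n))
      else 0)
    = (n : ℂ) *
      (if (IsUnit x ∨ IsUnit y) ∧
          (-2 * (m₂ : ZMod q) * (x ^ 2 + y ^ 2)⁻¹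
            + 4 * ((m₂ : ZMod q) * x - (m₃ : ZMod q) * y) * x * ((x ^ 2 + y ^ 2)⁻¹) ^ 2
            + (n₂ : ZMod q) = 0) ∧
          (2 * (m₃ : ZMod q) * (x ^ 2 + y ^ 2)⁻¹
            + 4 * ((m₂ : ZMod q) * x - (m₃ : ZMod q) * y) * y * ((x ^ 2 + y ^ 2)⁻¹) ^ 2
            + (n₃ : ZMod q) = 0) then
        ZMod.stdAddChar (phi n m₂ m₃ n₂ n₃ ((x.val : ℕ) : ZMod n) ((y.val : ℕ) : ZMod n))
      else 0) := by
  by_cases hxy : IsUnit x ∨ IsUnit y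
  · -- main case
    have hqn : q ∣ n := Dvd.intro q hn.symm
    have hq2 : (q : ZMod n) ^ 2 = 0 := by
      rw [← Nat.cast_pow, pow_two, ← hn, ZMod.natCast_self]
    set π := ZMod.castHom hqn (ZMod q) with hπdef
    set a₀ : ZMod n := ((x.val : ℕ) : ZMod n) with ha₀
    set b₀ : ZMod n := ((y.val : ℕ) : ZMod n) with hb₀
    set S : ZMod n := a₀ ^ 2 + b₀ ^ 2 with hSdef
    have hSu : IsUnit S := hS hxy
    have h1 : S * S⁻¹ = 1 := ZMod.mul_inv_of_unit S hSu
    set F : ZMod n := -2 * (m₂ : ZMod n) * S⁻¹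
      + 4 * ((m₂ : ZMod n) * a₀ - (m₃ : ZMod n) * b₀) * a₀ * (S⁻¹) ^ 2 + (n₂ : ZMod n) with hF
    set G : ZMod n := 2 * (m₃ : ZMod n) * S⁻¹
      + 4 * ((m₂ : ZMod n) * a₀ - (m₃ : ZMod n) * b₀) * b₀ * (S⁻¹) ^ 2 + (n₃ : ZMod n) with hG
    have hcastval : ∀ c : ZMod n, ((c.val : ℕ) : ZMod q) = π c := by
      intro c; rw [ZMod.natCast_val, hπdef, ZMod.castHom_apply]
    have hπa : π a₀ = x := by rw [ha₀]; rw [map_natCast, ZMod.natCast_zmod_val]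
    have hπb : π b₀ = y := by rw [hb₀]; rw [map_natCast, ZMod.natCast_zmod_val]
    have hπS : π S = x ^ 2 + y ^ 2 := by rw [hSdef, map_add, map_pow, map_pow, hπa, hπb]
    have hπSi : π S⁻¹ = (x ^ 2 + y ^ 2)⁻¹ := by
      rw [hπdef, castHom_inv' hqn S hSu, ← hπdef, hπS]
    have hπF : π F = -2 * (m₂ : ZMod q) * (x ^ 2 + y ^ 2)⁻¹
        + 4 * ((m₂ : ZMod q) * x - (m₃ : ZMod q) * y) * x * ((x ^ 2 + y ^ 2)⁻¹) ^ 2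
        + (n₂ : ZMod q) := by
      rw [hF]
      simp only [map_add, map_mul, map_sub, map_pow, map_neg, map_ofNat, map_intCast,
        hπa, hπb, hπSi]
    have hπG : π G = 2 * (m₃ : ZMod q) * (x ^ 2 + y ^ 2)⁻¹
        + 4 * ((m₂ : ZMod q) * x - (m₃ : ZMod q) * y) * y * ((x ^ 2 + y ^ 2)⁻¹) ^ 2
        + (n₃ : ZMod q) := by
      rw [hG]
      simp only [map_add, map_mul, map_sub, map_pow, map_neg, map_ofNat, map_intCast,
        hπa, hπb, hπSi]
    -- Taylor expansion of the phase
    have key : ∀ u v : ZMod q,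
        phi n m₂ m₃ n₂ n₃ (((x.val + q * u.val : ℕ)) : ZMod n)
          (((y.val + q * v.val : ℕ)) : ZMod n)
        = phi n m₂ m₃ n₂ n₃ a₀ b₀
          + (q : ZMod n) * (F * ((u.val : ℕ) : ZMod n) + G * ((v.val : ℕ) : ZMod n)) := by
      intro u v
      have hA : (((x.val + q * u.val : ℕ)) : ZMod n)
          = a₀ + (q : ZMod n) * ((u.val : ℕ) : ZMod n) := by push_cast [ha₀]; ring
      have hB : (((y.val + q * v.val : ℕ)) : ZMod n)
          = b₀ + (q : ZMod n) * ((v.val : ℕ) : ZMod n) := by push_cast [hb₀]; ring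
      set u' : ZMod n := ((u.val : ℕ) : ZMod n)
      set v' : ZMod n := ((v.val : ℕ) : ZMod n)
      set E : ZMod n := 2 * (a₀ * u' + b₀ * v') with hE
      have hSum : (a₀ + (q : ZMod n) * u') ^ 2 + (b₀ + (q : ZMod n) * v') ^ 2
          = S + (q : ZMod n) * E := by
        rw [hSdef, hE]; linear_combination (u' ^ 2 + v' ^ 2) * hq2
      have hinv : ((a₀ + (q : ZMod n) * u') ^ 2 + (b₀ + (q : ZMod n) * v') ^ 2)⁻¹
          = S⁻¹ - (q : ZMod n) * E * (S⁻¹) ^ 2 := by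
        rw [hSum]
        apply ZMod.inv_eq_of_mul_eq_one
        linear_combination (1 - (q : ZMod n) * E * S⁻¹) * h1 - E ^ 2 * (S⁻¹) ^ 2 * hq2
      rw [hA, hB]
      unfold phi
      rw [hinv, hF, hG, hSdef]
      linear_combination (2 * ((m₂ : ZMod n) * u' - (m₃ : ZMod n) * v') * E * (S⁻¹) ^ 2) * hq2
    have hterm : ∀ u v : ZMod q,
        (if IsUnit (((x.val + q * u.val : ℕ)) : ZMod n)
            ∨ IsUnit (((y.val + q * v.val : ℕ)) : ZMod n) then
          ZMod.stdAddChar (phi n m₂ m₃ n₂ n₃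
            (((x.val + q * u.val : ℕ)) : ZMod n) (((y.val + q * v.val : ℕ)) : ZMod n))
        else 0)
        = ZMod.stdAddChar (phi n m₂ m₃ n₂ n₃ a₀ b₀) *
          (ZMod.stdAddChar (π F * u) * ZMod.stdAddChar (π G * v)) := by
      intro u v
      have hπu : π ((u.val : ℕ) : ZMod n) = u := by rw [map_natCast, ZMod.natCast_zmod_val]
      have hπv : π ((v.val : ℕ) : ZMod n) = v := by rw [map_natCast, ZMod.natCast_zmod_val]
      have hcond : IsUnit (((x.val + q * u.val : ℕ)) : ZMod n)
          ∨ IsUnit (((y.val + q * v.val : ℕ)) : ZMod n) := by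
        rcases hxy with h | h
        · exact Or.inl ((hunit x u).mpr h)
        · exact Or.inr ((hunit y v).mpr h)
      rw [if_pos hcond, key u v, AddChar.map_add_eq_mul, stdAddChar_q_mul' hn, hcastval,
        map_add, map_mul, map_mul, hπu, hπv, AddChar.map_add_eq_mul]
    have step1 : (∑ u : ZMod q, ∑ v : ZMod q,
        if IsUnit (((x.val + q * u.val : ℕ)) : ZMod n)
            ∨ IsUnit (((y.val + q * v.val : ℕ)) : ZMod n) then
          ZMod.stdAddChar (phi n m₂ m₃ n₂ n₃
            (((x.val + q * u.val : ℕ)) : ZMod n) (((y.val + q * v.val : ℕ)) : ZMod n))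
        else 0)
        = ZMod.stdAddChar (phi n m₂ m₃ n₂ n₃ a₀ b₀) *
          ((if π F = 0 then (q : ℂ) else 0) * (if π G = 0 then (q : ℂ) else 0)) := by
      rw [← char_sum' q (π F), ← char_sum' q (π G)]
      rw [Finset.sum_mul_sum, Finset.mul_sum]
      refine Finset.sum_congr rfl fun u _ => ?_
      rw [Finset.mul_sum]
      exact Finset.sum_congr rfl fun v _ => hterm u v
    rw [step1, hπF, hπG]
    have hcn : (n : ℂ) = (q : ℂ) * (q : ℂ) := by rw [hn]; push_cast; ring
    rw [hcn]
    have hnot1 : ∀ (P Q R : Prop), ¬Q → ¬(P ∧ Q ∧ R) := fun _ _ _ h hh => h hh.2.1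
    have hnot2 : ∀ (P Q R : Prop), ¬R → ¬(P ∧ Q ∧ R) := fun _ _ _ h hh => h hh.2.2
    by_cases hB : -2 * (m₂ : ZMod q) * (x ^ 2 + y ^ 2)⁻¹
        + 4 * ((m₂ : ZMod q) * x - (m₃ : ZMod q) * y) * x * ((x ^ 2 + y ^ 2)⁻¹) ^ 2
        + (n₂ : ZMod q) = 0
    · by_cases hC : 2 * (m₃ : ZMod q) * (x ^ 2 + y ^ 2)⁻¹
          + 4 * ((m₂ : ZMod q) * x - (m₃ : ZMod q) * y) * y * ((x ^ 2 + y ^ 2)⁻¹) ^ 2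
          + (n₃ : ZMod q) = 0
      · rw [if_pos hB, if_pos hC, if_pos ⟨hxy, hB, hC⟩]; ring
      · rw [if_pos hB, if_neg hC, if_neg (hnot2 _ _ _ hC)]; ring
    · rw [if_neg hB, if_neg (hnot1 _ _ _ hB)]; ring
  · -- degenerate case
    have hc : ∀ u v : ZMod q,
        ¬ (IsUnit (((x.val + q * u.val : ℕ)) : ZMod n)
          ∨ IsUnit (((y.val + q * v.val : ℕ)) : ZMod n)) := by
      intro u v h
      rcases h with h | h
      · exact hxy (Or.inl ((hunit x u).mp h))
      · exact hxy (Or.inr ((hunit y v).mp h))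
    rw [if_neg (by tauto), mul_zero]
    refine Finset.sum_eq_zero fun u _ => Finset.sum_eq_zero fun v _ => ?_
    rw [if_neg (hc u v)]

open scoped Classical in
/-- `p`-adic stationary phase identity for the `SO(4,2)` sum `S₄` with modulus
`p^{4t}` (`p ≡ 3 (mod 4)` prime, `t ≥ 1`):
`S₄(m₂,m₃,n₂,n₃;p^{4t}) = Σ_{a,b mod p^{2t}, gcd(a,b,p)=1}
   e(−2(m₂a−m₃b)(a²+b²)⁻¹/p^{2t}) e((n₂a+n₃b)/p^{2t})`
equals `p^{2t}` times the sum of `e((−2(m₂a−m₃b)(a²+b²)⁻¹ + n₂a + n₃b)/p^{2t})` over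
the stationary points `a, b mod p^t`, `gcd(a,b,p) = 1`, satisfying
`f(a,b) ≡ g(a,b) ≡ 0 (mod p^t)` where
`f(a,b) = −2m₂(a²+b²)⁻¹ + 4(m₂a−m₃b)a(a²+b²)⁻² + n₂` and
`g(a,b) = 2m₃(a²+b²)⁻¹ + 4(m₂a−m₃b)b(a²+b²)⁻² + n₃`
(in the second sum the phase is evaluated modulo `p^{2t}` at the lifts `a.val`,
`b.val`). -/
theorem so42_stationary_phase_r_eq_four_t (p : ℕ) [Fact p.Prime] (hp4 : p % 4 = 3)
    (t : ℕ) (ht : 1 ≤ t) (m₂ m₃ n₂ n₃ : ℤ) :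
    (∑ a : ZMod (p ^ (2 * t)), ∑ b : ZMod (p ^ (2 * t)),
      if IsUnit a ∨ IsUnit b then
        eQ ((((-2 * ((m₂ : ZMod (p ^ (2 * t))) * a - (m₃ : ZMod (p ^ (2 * t))) * b)
              * (a ^ 2 + b ^ 2)⁻¹).val : ℕ) : ℚ) / (p : ℚ) ^ (2 * t)) *
        eQ (((((n₂ : ZMod (p ^ (2 * t))) * a + (n₃ : ZMod (p ^ (2 * t))) * b).val
              : ℕ) : ℚ) / (p : ℚ) ^ (2 * t))
      else 0)
    = (p : ℂ) ^ (2 * t) *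
      (∑ a : ZMod (p ^ t), ∑ b : ZMod (p ^ t),
        if (IsUnit a ∨ IsUnit b) ∧
            (-2 * (m₂ : ZMod (p ^ t)) * (a ^ 2 + b ^ 2)⁻¹
              + 4 * ((m₂ : ZMod (p ^ t)) * a - (m₃ : ZMod (p ^ t)) * b) * a
                  * ((a ^ 2 + b ^ 2)⁻¹) ^ 2 + (n₂ : ZMod (p ^ t)) = 0) ∧
            (2 * (m₃ : ZMod (p ^ t)) * (a ^ 2 + b ^ 2)⁻¹
              + 4 * ((m₂ : ZMod (p ^ t)) * a - (m₃ : ZMod (p ^ t)) * b) * b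
                  * ((a ^ 2 + b ^ 2)⁻¹) ^ 2 + (n₃ : ZMod (p ^ t)) = 0) then
          eQ ((((-2 * ((m₂ : ZMod (p ^ (2 * t))) * (a.val : ZMod (p ^ (2 * t)))
                    - (m₃ : ZMod (p ^ (2 * t))) * (b.val : ZMod (p ^ (2 * t))))
                * (((a.val : ZMod (p ^ (2 * t)))) ^ 2
                    + ((b.val : ZMod (p ^ (2 * t)))) ^ 2)⁻¹
              + (n₂ : ZMod (p ^ (2 * t))) * (a.val : ZMod (p ^ (2 * t)))
              + (n₃ : ZMod (p ^ (2 * t))) * (b.val : ZMod (p ^ (2 * t)))).val : ℕ)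
            : ℚ) / (p : ℚ) ^ (2 * t))
        else 0) := by
  have hp : p.Prime := Fact.out
  have hn : p ^ (2 * t) = p ^ t * p ^ t := by rw [← pow_add]; congr 1; omega
  have ht0 : t ≠ 0 := by omega
  -- convert eQ to stdAddChar
  simp only [show ((p : ℚ)) ^ (2 * t) = ((p ^ (2 * t) : ℕ) : ℚ) from by push_cast; ring,
    eQ_val_eq_stdAddChar]
  -- combine the two characters on the LHS into one phase
  have hφ1 : ∀ a b : ZMod (p ^ (2 * t)),
      ZMod.stdAddChar (-2 * ((m₂ : ZMod (p ^ (2 * t))) * a - (m₃ : ZMod (p ^ (2 * t))) * b)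
          * (a ^ 2 + b ^ 2)⁻¹) *
        ZMod.stdAddChar ((n₂ : ZMod (p ^ (2 * t))) * a + (n₃ : ZMod (p ^ (2 * t))) * b)
      = ZMod.stdAddChar (phi (p ^ (2 * t)) m₂ m₃ n₂ n₃ a b) := by
    intro a b
    rw [← AddChar.map_add_eq_mul]
    congr 1
    unfold phi
    ring
  simp only [hφ1]
  -- identify RHS phases with phi
  have hφ2 : ∀ x y : ZMod (p ^ t),
      (-2 * ((m₂ : ZMod (p ^ (2 * t))) * ((x.val : ℕ) : ZMod (p ^ (2 * t)))
            - (m₃ : ZMod (p ^ (2 * t))) * ((y.val : ℕ) : ZMod (p ^ (2 * t))))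
          * ((((x.val : ℕ) : ZMod (p ^ (2 * t)))) ^ 2
              + (((y.val : ℕ) : ZMod (p ^ (2 * t)))) ^ 2)⁻¹
        + (n₂ : ZMod (p ^ (2 * t))) * ((x.val : ℕ) : ZMod (p ^ (2 * t)))
        + (n₃ : ZMod (p ^ (2 * t))) * ((y.val : ℕ) : ZMod (p ^ (2 * t))))
      = phi (p ^ (2 * t)) m₂ m₃ n₂ n₃
          ((x.val : ℕ) : ZMod (p ^ (2 * t))) ((y.val : ℕ) : ZMod (p ^ (2 * t))) :=
    fun x y => rfl
  simp only [hφ2]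
  rw [double_expand (p ^ t) (p ^ (2 * t)) hn]
  rw [show ((p : ℂ)) ^ (2 * t) = ((p ^ (2 * t) : ℕ) : ℂ) from by push_cast; ring,
    Finset.mul_sum]
  refine Finset.sum_congr rfl fun x _ => ?_
  rw [Finset.mul_sum]
  refine Finset.sum_congr rfl fun y _ => ?_
  exact core_lemma (p ^ t) (p ^ (2 * t)) hn m₂ m₃ n₂ n₃ x y
    (fun z w => hunit_lemma p t ht0 z w) (hS_lemma p t hp4 ht0 x y)
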